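/- For every integer k ≥ 1 and every x ∈ (0,∞): M_{k,k}(x)·M_{k,k}(1/s(x)) = 1, and M_{k+1,k}(x)·M_{k+1,k}(1/x) = 1. In particular M_{k,k}(3) = 1 and M_{k+1,k}(1) = 1. -/

import Mathlib

/-- `ω(x) = √(8x+1)`. -/
noncomputable def wF (x : ℝ) : ℝ := Real.sqrt (8 * x + 1)

/-- `c(x) = (ω+3)²/16`. -/
noncomputable def cF (x : ℝ) : ℝ := (wF x + 3) ^ 2 / 16

/-- `d(x) = (ω+3)²/(8(ω+1))`. -/
noncomputable def dF (x : ℝ) : ℝ := (wF x + 3) ^ 2 / (8 * (wF x + 1))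

/-- `s(x) = (ω−1)²/(4(ω+7))`. -/
noncomputable def sF (x : ℝ) : ℝ := (wF x - 1) ^ 2 / (4 * (wF x + 7))

/-- `s₋₁(x) = 1/s(1/x)`, the inverse of `s`. -/
noncomputable def sFinv (x : ℝ) : ℝ := 1 / sF (1 / x)

/-- The ℤ-indexed iterates of `s`. -/
noncomputable def sIter (k : ℤ) (x : ℝ) : ℝ :=
  if 0 ≤ k then sF^[k.toNat] x else sFinv^[(-k).toNat] x

/-- `P₀ = 1` and `P_{k+1} − P_k = ∏_{i=0}^{k} (c_i(x) − 1)`. -/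
noncomputable def Pfun (x : ℝ) : ℕ → ℝ
  | 0 => 1
  | k + 1 => Pfun x k + ∏ i ∈ Finset.range (k + 1), (cF (sIter i x) - 1)

/-- `S₀ = 1` and `S_{k+1} − S_k = ∏_{i=0}^{k} (d_i(x) − 1)`. -/
noncomputable def Sfun (x : ℝ) : ℕ → ℝ
  | 0 => 1
  | k + 1 => Sfun x k + ∏ i ∈ Finset.range (k + 1), (dF (sIter i x) - 1)

/-- `Q₁ = 0` and `Q_{k+1} − Q_k = ∏_{i=1}^{k} (c_{−i}(x) − 1)⁻¹` for `k ≥ 1`. -/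
noncomputable def Qfun (x : ℝ) : ℕ → ℝ
  | 0 => 0
  | 1 => 0
  | k + 2 => Qfun x (k + 1) + ∏ i ∈ Finset.range (k + 1), (cF (sIter (-((i : ℤ) + 1)) x) - 1)⁻¹

/-- `T₁ = 0` and `T_{k+1} − T_k = ∏_{i=1}^{k} (d_{−i}(x) − 1)⁻¹` for `k ≥ 1`. -/
noncomputable def Tfun (x : ℝ) : ℕ → ℝ
  | 0 => 0
  | 1 => 0
  | k + 2 => Tfun x (k + 1) + ∏ i ∈ Finset.range (k + 1), (dF (sIter (-((i : ℤ) + 1)) x) - 1)⁻¹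

/-- The finite-trail Mina margin map `M_{ℓ,k}(x) = x(S_k + T_ℓ)/(P_k + Q_ℓ)`. -/
noncomputable def Mfin (l k : ℕ) (x : ℝ) : ℝ :=
  x * (Sfun x k + Tfun x l) / (Pfun x k + Qfun x l)

lemma wF_sq {z : ℝ} (hz : 0 < z) : (wF z) ^ 2 = 8 * z + 1 :=
  Real.sq_sqrt (by linarith)
lemma wF_gt_one {z : ℝ} (hz : 0 < z) : 1 < wF z := by
  have h := Real.sqrt_lt_sqrt (by norm_num : (0:ℝ) ≤ 1) (show (1:ℝ) < 8 * z + 1 by linarith)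
  simpa [wF] using h
lemma sF_pos {z : ℝ} (hz : 0 < z) : 0 < sF z := by
  have h1 := wF_gt_one hz
  exact div_pos (pow_pos (by linarith) 2) (by linarith)
lemma cF_sub_one (z : ℝ) : cF z - 1 = (wF z - 1) * (wF z + 7) / 16 := by
  unfold cF; ring
lemma dF_sub_one {z : ℝ} (hz : 0 < z) :
    dF z - 1 = (wF z - 1) ^ 2 / (8 * (wF z + 1)) := by
  have h1 := wF_gt_one hz
  unfold dF; field_simp; ring
lemma cF_sub_one_pos {z : ℝ} (hz : 0 < z) : 0 < cF z - 1 := by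
  have h1 := wF_gt_one hz
  rw [cF_sub_one]
  exact div_pos (mul_pos (by linarith) (by linarith)) (by norm_num)
lemma dF_sub_one_pos {z : ℝ} (hz : 0 < z) : 0 < dF z - 1 := by
  have h1 := wF_gt_one hz
  rw [dF_sub_one hz]
  exact div_pos (pow_pos (by linarith) 2) (by linarith)
lemma wF_inv_sF {z : ℝ} (hz : 0 < z) :
    wF (1 / sF z) = (wF z + 15) / (wF z - 1) := by
  have h1 := wF_gt_one hz
  have hne1 : wF z - 1 ≠ 0 := by linarith
  have hne7 : wF z + 7 ≠ 0 := by linarith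
  have h2 : 8 * (1 / sF z) + 1 = ((wF z + 15) / (wF z - 1)) ^ 2 := by
    unfold sF; field_simp; ring
  rw [wF, h2, Real.sqrt_sq (div_nonneg (by linarith) (by linarith))]
lemma sF_inv_sF {z : ℝ} (hz : 0 < z) : sF (1 / sF z) = 1 / z := by
  have h1 := wF_gt_one hz
  have h2 := wF_sq hz
  have h3 : sF (1 / sF z) = (wF (1 / sF z) - 1) ^ 2 / (4 * (wF (1 / sF z) + 7)) := rfl
  have hne1 : wF z - 1 ≠ 0 := by linarith
  have hz' : z ≠ 0 := ne_of_gt hz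
  have e1 : (wF z + 15) / (wF z - 1) - 1 = 16 / (wF z - 1) := by field_simp; ring
  have e2 : (wF z + 15) / (wF z - 1) + 7 = 8 * (wF z + 1) / (wF z - 1) := by field_simp; ring
  rw [h3, wF_inv_sF hz, e1, e2]
  have hne1' : wF z + 1 ≠ 0 := by linarith
  rw [div_eq_div_iff (by positivity) (ne_of_gt hz)]
  field_simp
  linear_combination (-32) * h2
lemma cF_mirror {z : ℝ} (hz : 0 < z) : cF (1 / sF z) - 1 = (dF z - 1)⁻¹ := by
  have h1 := wF_gt_one hz
  rw [cF_sub_one, wF_inv_sF hz, dF_sub_one hz]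
  have hne1 : wF z - 1 ≠ 0 := by linarith
  field_simp
  ring
lemma dF_mirror {z : ℝ} (hz : 0 < z) : dF (1 / sF z) - 1 = (cF z - 1)⁻¹ := by
  have h1 := wF_gt_one hz
  have h3 : dF (1 / sF z) = (wF (1 / sF z) + 3) ^ 2 / (8 * (wF (1 / sF z) + 1)) := rfl
  have hne1 : wF z - 1 ≠ 0 := by linarith
  have hne7 : wF z + 7 ≠ 0 := by linarith
  have e3 : (wF z + 15) / (wF z - 1) + 3 = 4 * (wF z + 3) / (wF z - 1) := by field_simp; ring
  have e4 : (wF z + 15) / (wF z - 1) + 1 = 2 * (wF z + 7) / (wF z - 1) := by field_simp; ring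
  rw [h3, wF_inv_sF hz, e3, e4, cF_sub_one, inv_div]
  field_simp
  ring
lemma x_dF {z : ℝ} (hz : 0 < z) : z * (dF z - 1) = sF z * (cF z - 1) := by
  have h1 := wF_gt_one hz
  have h2 := wF_sq hz
  rw [dF_sub_one hz, cF_sub_one]
  unfold sF
  have hne1 : wF z + 1 ≠ 0 := by linarith
  have hne7 : wF z + 7 ≠ 0 := by linarith
  field_simp
  linear_combination (-8 * (wF z - 1) ^ 2) * h2
lemma sFinv_pos {x : ℝ} (hx : 0 < x) : 0 < sFinv x := by
  unfold sFinv
  have := sF_pos (show 0 < 1 / x by positivity)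
  positivity
lemma sF_sFinv {x : ℝ} (hx : 0 < x) : sF (sFinv x) = x := by
  unfold sFinv
  rw [sF_inv_sF (show 0 < 1 / x by positivity), one_div_one_div]
lemma sFinv_sF {x : ℝ} (hx : 0 < x) : sFinv (sF x) = x := by
  have h : sFinv (sF x) = 1 / sF (1 / sF x) := rfl
  rw [h, sF_inv_sF hx, one_div_one_div]
lemma sIter_natCast (n : ℕ) (x : ℝ) : sIter (n : ℤ) x = sF^[n] x := by
  simp [sIter]
lemma sIter_zero (x : ℝ) : sIter 0 x = x := by simp [sIter]
lemma sIter_coe_succ (n : ℕ) (x : ℝ) : sIter ((n : ℤ) + 1) x = sF (sIter (n : ℤ) x) := by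
  have h : ((n : ℤ) + 1) = ((n + 1 : ℕ) : ℤ) := by push_cast; ring
  rw [h, sIter_natCast, sIter_natCast, Function.iterate_succ_apply']
lemma sIter_neg (n : ℕ) (x : ℝ) : sIter (-(n : ℤ)) x = sFinv^[n] x := by
  rcases Nat.eq_zero_or_pos n with h | h
  · subst h; simp [sIter]
  · have h0 : ¬ (0 ≤ -(n : ℤ)) := by omega
    simp only [sIter, h0, if_false, neg_neg, Int.toNat_natCast]
lemma sIter_negsucc (n : ℕ) (x : ℝ) :
    sIter (-((n : ℤ) + 1)) x = sFinv (sIter (-(n : ℤ)) x) := by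
  have h : -((n : ℤ) + 1) = -(((n + 1 : ℕ) : ℤ)) := by push_cast; ring
  rw [h, sIter_neg, sIter_neg, Function.iterate_succ_apply']
lemma sF_iter_pos {x : ℝ} (hx : 0 < x) (n : ℕ) : 0 < sF^[n] x := by
  induction n with
  | zero => exact hx
  | succ n ih => rw [Function.iterate_succ_apply']; exact sF_pos ih
lemma sFinv_iter_pos {x : ℝ} (hx : 0 < x) (n : ℕ) : 0 < sFinv^[n] x := by
  induction n with
  | zero => exact hx
  | succ n ih => rw [Function.iterate_succ_apply']; exact sFinv_pos ih
lemma sIter_pos {x : ℝ} (hx : 0 < x) (j : ℤ) : 0 < sIter j x := by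
  unfold sIter
  split_ifs
  · exact sF_iter_pos hx _
  · exact sFinv_iter_pos hx _
lemma sF_sIter_neg {x : ℝ} (hx : 0 < x) (n : ℕ) :
    sF (sIter (-((n : ℤ) + 1)) x) = sIter (-(n : ℤ)) x := by
  rw [sIter_negsucc]
  exact sF_sFinv (sIter_pos hx _)
lemma sIter_sigma_nat {x : ℝ} (hx : 0 < x) :
    ∀ n : ℕ, sIter (n : ℤ) (1 / sF x) = 1 / sF (sIter (-(n : ℤ)) x) := by
  intro n
  induction n with
  | zero => simp [sIter_zero]
  | succ n ih =>
    have h : ((n + 1 : ℕ) : ℤ) = (n : ℤ) + 1 := by push_cast; ring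
    rw [h, sIter_coe_succ, ih, sF_inv_sF (sIter_pos hx _), sF_sIter_neg hx n]
lemma sIter_sigma_neg {x : ℝ} (hx : 0 < x) :
    ∀ n : ℕ, sIter (-(n : ℤ)) (1 / sF x) = 1 / sF (sIter (n : ℤ) x) := by
  intro n
  induction n with
  | zero => simp [sIter_zero]
  | succ n ih =>
    have h : -((n + 1 : ℕ) : ℤ) = -((n : ℤ) + 1) := by push_cast; ring
    rw [h, sIter_negsucc, ih]
    unfold sFinv
    rw [one_div_one_div, ← sIter_coe_succ]
    norm_cast
lemma sIter_sinv_nat {x : ℝ} (hx : 0 < x) :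
    ∀ n : ℕ, sIter ((n + 1 : ℕ) : ℤ) (sFinv x) = sIter (n : ℤ) x := by
  intro n
  induction n with
  | zero =>
    have h : ((0 + 1 : ℕ) : ℤ) = ((0 : ℕ) : ℤ) + 1 := by norm_num
    rw [h, sIter_coe_succ, sIter_natCast, sIter_natCast]
    simpa using sF_sFinv hx
  | succ n ih =>
    have h : ((n + 2 : ℕ) : ℤ) = ((n + 1 : ℕ) : ℤ) + 1 := by push_cast; ring
    have h2 : ((n + 1 : ℕ) : ℤ) = (n : ℤ) + 1 := by push_cast; ring
    rw [show ((n + 1 + 1 : ℕ) : ℤ) = ((n + 1 : ℕ) : ℤ) + 1 by push_cast; ring,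
      sIter_coe_succ, ih, h2, sIter_coe_succ]
lemma sIter_sinv_neg (x : ℝ) (n : ℕ) :
    sIter (-(n : ℤ)) (sFinv x) = sIter (-((n : ℤ) + 1)) x := by
  rw [sIter_neg, sIter_negsucc, sIter_neg, ← Function.iterate_succ_apply,
    Function.iterate_succ_apply']
lemma Pfun_succ (x : ℝ) (k : ℕ) :
    Pfun x (k + 1) = Pfun x k + ∏ i ∈ Finset.range (k + 1), (cF (sIter i x) - 1) := rfl
lemma Sfun_succ (x : ℝ) (k : ℕ) :
    Sfun x (k + 1) = Sfun x k + ∏ i ∈ Finset.range (k + 1), (dF (sIter i x) - 1) := rfl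
lemma Qfun_succ (x : ℝ) (k : ℕ) :
    Qfun x (k + 2) = Qfun x (k + 1) +
      ∏ i ∈ Finset.range (k + 1), (cF (sIter (-((i : ℤ) + 1)) x) - 1)⁻¹ := rfl
lemma Tfun_succ (x : ℝ) (k : ℕ) :
    Tfun x (k + 2) = Tfun x (k + 1) +
      ∏ i ∈ Finset.range (k + 1), (dF (sIter (-((i : ℤ) + 1)) x) - 1)⁻¹ := rfl
lemma sIter_zero' (x : ℝ) : sIter ((0 : ℕ) : ℤ) x = x := by
  rw [Nat.cast_zero, sIter_zero]

-- pointwise mirror identities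
lemma cA {x : ℝ} (hx : 0 < x) (n : ℕ) :
    cF (sIter (n : ℤ) (1 / sF x)) - 1 = (dF (sIter (-(n : ℤ)) x) - 1)⁻¹ := by
  rw [sIter_sigma_nat hx n, cF_mirror (sIter_pos hx _)]
lemma dA {x : ℝ} (hx : 0 < x) (n : ℕ) :
    dF (sIter (n : ℤ) (1 / sF x)) - 1 = (cF (sIter (-(n : ℤ)) x) - 1)⁻¹ := by
  rw [sIter_sigma_nat hx n, dF_mirror (sIter_pos hx _)]
lemma cB {x : ℝ} (hx : 0 < x) (n : ℕ) :
    cF (sIter (-(n : ℤ)) (1 / sF x)) - 1 = (dF (sIter (n : ℤ) x) - 1)⁻¹ := by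
  rw [sIter_sigma_neg hx n, cF_mirror (sIter_pos hx _)]
lemma dB {x : ℝ} (hx : 0 < x) (n : ℕ) :
    dF (sIter (-(n : ℤ)) (1 / sF x)) - 1 = (cF (sIter (n : ℤ) x) - 1)⁻¹ := by
  rw [sIter_sigma_neg hx n, dF_mirror (sIter_pos hx _)]

-- product lemmas
lemma prodPσ {x : ℝ} (hx : 0 < x) (m : ℕ) :
    ∏ i ∈ Finset.range (m + 1), (cF (sIter (i : ℤ) (1 / sF x)) - 1)
      = (dF x - 1)⁻¹ * ∏ i ∈ Finset.range m, (dF (sIter (-((i : ℤ) + 1)) x) - 1)⁻¹ := by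
  rw [Finset.prod_range_succ']
  have h0 : cF (sIter ((0 : ℕ) : ℤ) (1 / sF x)) - 1 = (dF x - 1)⁻¹ := by
    rw [cA hx 0]; rw [Nat.cast_zero, neg_zero, sIter_zero]
  rw [h0, mul_comm]
  congr 1
  refine Finset.prod_congr rfl fun i _ => ?_
  rw [cA hx (i + 1)]
  congr 2
lemma prodSσ {x : ℝ} (hx : 0 < x) (m : ℕ) :
    ∏ i ∈ Finset.range (m + 1), (dF (sIter (i : ℤ) (1 / sF x)) - 1)
      = (cF x - 1)⁻¹ * ∏ i ∈ Finset.range m, (cF (sIter (-((i : ℤ) + 1)) x) - 1)⁻¹ := by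
  rw [Finset.prod_range_succ']
  have h0 : dF (sIter ((0 : ℕ) : ℤ) (1 / sF x)) - 1 = (cF x - 1)⁻¹ := by
    rw [dA hx 0]; rw [Nat.cast_zero, neg_zero, sIter_zero]
  rw [h0, mul_comm]
  congr 1
  refine Finset.prod_congr rfl fun i _ => ?_
  rw [dA hx (i + 1)]
  congr 2
lemma prodQσ {x : ℝ} (hx : 0 < x) (m : ℕ) :
    ∏ i ∈ Finset.range m, (cF (sIter (-((i : ℤ) + 1)) (1 / sF x)) - 1)⁻¹
      = ∏ i ∈ Finset.range m, (dF (sIter ((i : ℤ) + 1) x) - 1) := by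
  refine Finset.prod_congr rfl fun i _ => ?_
  have h : -((i : ℤ) + 1) = -(((i + 1 : ℕ)) : ℤ) := by push_cast; ring
  rw [h, cB hx (i + 1), inv_inv]
  congr 2
lemma prodTσ {x : ℝ} (hx : 0 < x) (m : ℕ) :
    ∏ i ∈ Finset.range m, (dF (sIter (-((i : ℤ) + 1)) (1 / sF x)) - 1)⁻¹
      = ∏ i ∈ Finset.range m, (cF (sIter ((i : ℤ) + 1) x) - 1) := by
  refine Finset.prod_congr rfl fun i _ => ?_
  have h : -((i : ℤ) + 1) = -(((i + 1 : ℕ)) : ℤ) := by push_cast; ring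
  rw [h, dB hx (i + 1), inv_inv]
  congr 2
lemma prodS_shift (x : ℝ) (m : ℕ) :
    ∏ i ∈ Finset.range (m + 1), (dF (sIter (i : ℤ) x) - 1)
      = (dF x - 1) * ∏ i ∈ Finset.range m, (dF (sIter ((i : ℤ) + 1) x) - 1) := by
  rw [Finset.prod_range_succ', sIter_zero', mul_comm]
  push_cast
  rfl
lemma prodP_shift (x : ℝ) (m : ℕ) :
    ∏ i ∈ Finset.range (m + 1), (cF (sIter (i : ℤ) x) - 1)
      = (cF x - 1) * ∏ i ∈ Finset.range m, (cF (sIter ((i : ℤ) + 1) x) - 1) := by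
  rw [Finset.prod_range_succ', sIter_zero', mul_comm]
  push_cast
  rfl
lemma sIter_neg_one (x : ℝ) : sIter (-1) x = sFinv x := by
  have h := sIter_negsucc 0 x
  simpa [sIter_zero] using h
lemma P_sigma {x : ℝ} (hx : 0 < x) : ∀ m : ℕ,
    Pfun (1 / sF x) (m + 1) = 1 + (dF x - 1)⁻¹ * (1 + Tfun x (m + 1)) := by
  intro m
  induction m with
  | zero =>
    rw [Pfun_succ, prodPσ hx 0]
    simp [Pfun, Tfun]
  | succ m ih =>
    rw [Pfun_succ, ih, prodPσ hx (m + 1), Tfun_succ]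
    ring
lemma S_sigma {x : ℝ} (hx : 0 < x) : ∀ m : ℕ,
    Sfun (1 / sF x) (m + 1) = 1 + (cF x - 1)⁻¹ * (1 + Qfun x (m + 1)) := by
  intro m
  induction m with
  | zero =>
    rw [Sfun_succ, prodSσ hx 0]
    simp [Sfun, Qfun]
  | succ m ih =>
    rw [Sfun_succ, ih, prodSσ hx (m + 1), Qfun_succ]
    ring
lemma Q_sigma {x : ℝ} (hx : 0 < x) : ∀ m : ℕ,
    Qfun (1 / sF x) (m + 1) = (Sfun x (m + 1) - 1) * (dF x - 1)⁻¹ - 1 := by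
  have hd : dF x - 1 ≠ 0 := ne_of_gt (dF_sub_one_pos hx)
  intro m
  induction m with
  | zero =>
    show (0 : ℝ) = _
    rw [Sfun_succ, Finset.prod_range_one, sIter_zero']
    simp only [Sfun]
    field_simp; ring
  | succ m ih =>
    rw [Qfun_succ, ih, prodQσ hx (m + 1), Sfun_succ x (m + 1), prodS_shift x (m + 1)]
    set D := ∏ i ∈ Finset.range (m + 1), (dF (sIter ((i : ℤ) + 1) x) - 1) with hD
    field_simp
    ring
lemma T_sigma {x : ℝ} (hx : 0 < x) : ∀ m : ℕ,
    Tfun (1 / sF x) (m + 1) = (Pfun x (m + 1) - 1) * (cF x - 1)⁻¹ - 1 := by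
  have hc : cF x - 1 ≠ 0 := ne_of_gt (cF_sub_one_pos hx)
  intro m
  induction m with
  | zero =>
    show (0 : ℝ) = _
    rw [Pfun_succ, Finset.prod_range_one, sIter_zero']
    simp only [Pfun]
    field_simp; ring
  | succ m ih =>
    rw [Tfun_succ, ih, prodTσ hx (m + 1), Pfun_succ x (m + 1), prodP_shift x (m + 1)]
    set D := ∏ i ∈ Finset.range (m + 1), (cF (sIter ((i : ℤ) + 1) x) - 1) with hD
    field_simp
    ring
lemma prodPinv {x : ℝ} (hx : 0 < x) (m : ℕ) :
    ∏ i ∈ Finset.range (m + 1), (cF (sIter (i : ℤ) (sFinv x)) - 1)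
      = (cF (sFinv x) - 1) * ∏ i ∈ Finset.range m, (cF (sIter (i : ℤ) x) - 1) := by
  rw [Finset.prod_range_succ', sIter_zero', mul_comm]
  congr 1
  refine Finset.prod_congr rfl fun i _ => ?_
  rw [sIter_sinv_nat hx i]
lemma prodSinv {x : ℝ} (hx : 0 < x) (m : ℕ) :
    ∏ i ∈ Finset.range (m + 1), (dF (sIter (i : ℤ) (sFinv x)) - 1)
      = (dF (sFinv x) - 1) * ∏ i ∈ Finset.range m, (dF (sIter (i : ℤ) x) - 1) := by
  rw [Finset.prod_range_succ', sIter_zero', mul_comm]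
  congr 1
  refine Finset.prod_congr rfl fun i _ => ?_
  rw [sIter_sinv_nat hx i]
lemma prodQinv (x : ℝ) (m : ℕ) :
    ∏ i ∈ Finset.range (m + 1), (cF (sIter (-((i : ℤ) + 1)) x) - 1)⁻¹
      = (cF (sFinv x) - 1)⁻¹ *
        ∏ i ∈ Finset.range m, (cF (sIter (-((i : ℤ) + 1)) (sFinv x)) - 1)⁻¹ := by
  rw [Finset.prod_range_succ']
  have h0 : sIter (-(((0 : ℕ) : ℤ) + 1)) x = sFinv x := by
    rw [Nat.cast_zero, zero_add, sIter_neg_one]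
  rw [h0, mul_comm]
  congr 1
lemma prodTinv (x : ℝ) (m : ℕ) :
    ∏ i ∈ Finset.range (m + 1), (dF (sIter (-((i : ℤ) + 1)) x) - 1)⁻¹
      = (dF (sFinv x) - 1)⁻¹ *
        ∏ i ∈ Finset.range m, (dF (sIter (-((i : ℤ) + 1)) (sFinv x)) - 1)⁻¹ := by
  rw [Finset.prod_range_succ']
  have h0 : sIter (-(((0 : ℕ) : ℤ) + 1)) x = sFinv x := by
    rw [Nat.cast_zero, zero_add, sIter_neg_one]
  rw [h0, mul_comm]
  congr 1
lemma P_sinv {x : ℝ} (hx : 0 < x) : ∀ m : ℕ,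
    Pfun (sFinv x) (m + 1) = 1 + (cF (sFinv x) - 1) * Pfun x m := by
  intro m
  induction m with
  | zero =>
    rw [Pfun_succ, Finset.prod_range_one, sIter_zero']
    simp [Pfun]
  | succ m ih =>
    rw [Pfun_succ, ih, prodPinv hx (m + 1), Pfun_succ]
    ring
lemma S_sinv {x : ℝ} (hx : 0 < x) : ∀ m : ℕ,
    Sfun (sFinv x) (m + 1) = 1 + (dF (sFinv x) - 1) * Sfun x m := by
  intro m
  induction m with
  | zero =>
    rw [Sfun_succ, Finset.prod_range_one, sIter_zero']
    simp [Sfun]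
  | succ m ih =>
    rw [Sfun_succ, ih, prodSinv hx (m + 1), Sfun_succ]
    ring
lemma Q_sinv {x : ℝ} (hx : 0 < x) : ∀ m : ℕ,
    Qfun (sFinv x) (m + 1) = (cF (sFinv x) - 1) * Qfun x (m + 2) - 1 := by
  have hc : cF (sFinv x) - 1 ≠ 0 := ne_of_gt (cF_sub_one_pos (sFinv_pos hx))
  intro m
  induction m with
  | zero =>
    show (0 : ℝ) = _
    rw [Qfun_succ, Finset.prod_range_one]
    have h0 : sIter (-(((0 : ℕ) : ℤ) + 1)) x = sFinv x := by
      rw [Nat.cast_zero, zero_add, sIter_neg_one]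
    rw [h0]
    simp only [Qfun]
    field_simp; ring
  | succ m ih =>
    rw [Qfun_succ, ih, Qfun_succ x (m + 1), prodQinv x (m + 1)]
    set D := ∏ i ∈ Finset.range (m + 1), (cF (sIter (-((i : ℤ) + 1)) (sFinv x)) - 1)⁻¹ with hD
    field_simp
    ring
lemma T_sinv {x : ℝ} (hx : 0 < x) : ∀ m : ℕ,
    Tfun (sFinv x) (m + 1) = (dF (sFinv x) - 1) * Tfun x (m + 2) - 1 := by
  have hd : dF (sFinv x) - 1 ≠ 0 := ne_of_gt (dF_sub_one_pos (sFinv_pos hx))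
  intro m
  induction m with
  | zero =>
    show (0 : ℝ) = _
    rw [Tfun_succ, Finset.prod_range_one]
    have h0 : sIter (-(((0 : ℕ) : ℤ) + 1)) x = sFinv x := by
      rw [Nat.cast_zero, zero_add, sIter_neg_one]
    rw [h0]
    simp only [Tfun]
    field_simp; ring
  | succ m ih =>
    rw [Tfun_succ, ih, Tfun_succ x (m + 1), prodTinv x (m + 1)]
    set D := ∏ i ∈ Finset.range (m + 1), (dF (sIter (-((i : ℤ) + 1)) (sFinv x)) - 1)⁻¹ with hD
    field_simp
    ring
lemma Pfun_ge_one {x : ℝ} (hx : 0 < x) : ∀ k, 1 ≤ Pfun x k := by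
  intro k
  induction k with
  | zero => exact le_refl 1
  | succ k ih =>
    rw [Pfun_succ]
    have h0 : (0:ℝ) ≤ ∏ i ∈ Finset.range (k + 1), (cF (sIter (i : ℤ) x) - 1) :=
      Finset.prod_nonneg fun i _ => (cF_sub_one_pos (sIter_pos hx _)).le
    linarith
lemma Sfun_ge_one {x : ℝ} (hx : 0 < x) : ∀ k, 1 ≤ Sfun x k := by
  intro k
  induction k with
  | zero => exact le_refl 1
  | succ k ih =>
    rw [Sfun_succ]
    have h0 : (0:ℝ) ≤ ∏ i ∈ Finset.range (k + 1), (dF (sIter (i : ℤ) x) - 1) :=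
      Finset.prod_nonneg fun i _ => (dF_sub_one_pos (sIter_pos hx _)).le
    linarith
lemma Qfun_nonneg {x : ℝ} (hx : 0 < x) : ∀ k, 0 ≤ Qfun x k
  | 0 => le_refl 0
  | 1 => le_refl 0
  | (k + 2) => by
    have ih := Qfun_nonneg hx (k + 1)
    rw [Qfun_succ]
    have h0 : (0:ℝ) ≤ ∏ i ∈ Finset.range (k + 1), (cF (sIter (-((i : ℤ) + 1)) x) - 1)⁻¹ :=
      Finset.prod_nonneg fun i _ => inv_nonneg.2 (cF_sub_one_pos (sIter_pos hx _)).le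
    linarith
lemma Tfun_nonneg {x : ℝ} (hx : 0 < x) : ∀ k, 0 ≤ Tfun x k
  | 0 => le_refl 0
  | 1 => le_refl 0
  | (k + 2) => by
    have ih := Tfun_nonneg hx (k + 1)
    rw [Tfun_succ]
    have h0 : (0:ℝ) ≤ ∏ i ∈ Finset.range (k + 1), (dF (sIter (-((i : ℤ) + 1)) x) - 1)⁻¹ :=
      Finset.prod_nonneg fun i _ => inv_nonneg.2 (dF_sub_one_pos (sIter_pos hx _)).le
    linarith
lemma num_pos {x : ℝ} (hx : 0 < x) (l k : ℕ) : 0 < Sfun x k + Tfun x l := by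
  have := Sfun_ge_one hx k
  have := Tfun_nonneg hx l
  linarith
lemma den_pos {x : ℝ} (hx : 0 < x) (l k : ℕ) : 0 < Pfun x k + Qfun x l := by
  have := Pfun_ge_one hx k
  have := Qfun_nonneg hx l
  linarith
lemma Mfin_pos {x : ℝ} (hx : 0 < x) (l k : ℕ) : 0 < Mfin l k x :=
  div_pos (mul_pos hx (num_pos hx l k)) (den_pos hx l k)

-- Mirror symmetry: M_{l,k}(1/s(x)) numerator and denominator
lemma Mfin_sigma {x : ℝ} (hx : 0 < x) (l k : ℕ) :
    Mfin (l + 1) (k + 1) (1 / sF x) =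
      (1 / sF x) * ((cF x - 1)⁻¹ * (Pfun x (l + 1) + Qfun x (k + 1))) /
        ((dF x - 1)⁻¹ * (Sfun x (l + 1) + Tfun x (k + 1))) := by
  rw [Mfin, S_sigma hx k, T_sigma hx l, P_sigma hx k, Q_sigma hx l]
  ring_nf

/-- Symmetries of the finite-trail Mina margin maps:
`M_{k,k}(x)·M_{k,k}(1/s(x)) = 1` and `M_{k+1,k}(x)·M_{k+1,k}(1/x) = 1`;
in particular `M_{k,k}(3) = 1` and `M_{k+1,k}(1) = 1`. -/
theorem mfin_symmetries (k : ℕ) (hk : 1 ≤ k) (x : ℝ) (hx : 0 < x) :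
    Mfin k k x * Mfin k k (1 / sF x) = 1 ∧
    Mfin (k + 1) k x * Mfin (k + 1) k (1 / x) = 1 ∧
    Mfin k k 3 = 1 ∧
    Mfin (k + 1) k 1 = 1 := by
  obtain ⟨m, rfl⟩ : ∃ m, k = m + 1 := ⟨k - 1, by omega⟩
  have main1 : ∀ y : ℝ, 0 < y →
      Mfin (m + 1) (m + 1) y * Mfin (m + 1) (m + 1) (1 / sF y) = 1 := by
    intro y hy
    have hc : cF y - 1 ≠ 0 := ne_of_gt (cF_sub_one_pos hy)
    have hd : dF y - 1 ≠ 0 := ne_of_gt (dF_sub_one_pos hy)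
    have hs : sF y ≠ 0 := ne_of_gt (sF_pos hy)
    have hN : Sfun y (m + 1) + Tfun y (m + 1) ≠ 0 := ne_of_gt (num_pos hy (m + 1) (m + 1))
    have hD : Pfun y (m + 1) + Qfun y (m + 1) ≠ 0 := ne_of_gt (den_pos hy (m + 1) (m + 1))
    have hkey := x_dF hy
    rw [Mfin_sigma hy m m, Mfin]
    field_simp
    linear_combination hkey
  have main2 : ∀ y : ℝ, 0 < y →
      Mfin (m + 2) (m + 1) y * Mfin (m + 2) (m + 1) (1 / y) = 1 := by
    intro y hy
    have hy' : 0 < sFinv y := sFinv_pos hy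
    have h1y : 1 / y = 1 / sF (sFinv y) := by rw [sF_sFinv hy]
    have hc : cF (sFinv y) - 1 ≠ 0 := ne_of_gt (cF_sub_one_pos hy')
    have hd : dF (sFinv y) - 1 ≠ 0 := ne_of_gt (dF_sub_one_pos hy')
    have hy0 : y ≠ 0 := ne_of_gt hy
    have hN : Sfun y (m + 1) + Tfun y (m + 2) ≠ 0 := ne_of_gt (num_pos hy (m + 2) (m + 1))
    have hD : Pfun y (m + 1) + Qfun y (m + 2) ≠ 0 := ne_of_gt (den_pos hy (m + 2) (m + 1))
    have e1 : (cF (sFinv y) - 1)⁻¹ * (Pfun (sFinv y) (m + 1 + 1) + Qfun (sFinv y) (m + 1))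
        = Pfun y (m + 1) + Qfun y (m + 2) := by
      rw [P_sinv hy (m + 1), Q_sinv hy m]
      field_simp
      ring
    have e2 : (dF (sFinv y) - 1)⁻¹ * (Sfun (sFinv y) (m + 1 + 1) + Tfun (sFinv y) (m + 1))
        = Sfun y (m + 1) + Tfun y (m + 2) := by
      rw [S_sinv hy (m + 1), T_sinv hy m]
      field_simp
      ring
    rw [h1y, Mfin_sigma hy' (m + 1) m, sF_sFinv hy, e1, e2, Mfin]
    field_simp
  refine ⟨main1 x hx, main2 x hx, ?_, ?_⟩
  · have h3 : (0:ℝ) < 3 := by norm_num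
    have hw3 : wF 3 = 5 := by
      rw [wF, show (8 * (3:ℝ) + 1) = 5 ^ 2 by norm_num, Real.sqrt_sq (by norm_num : (0:ℝ) ≤ 5)]
    have hsF3 : sF 3 = 1 / 3 := by
      rw [sF, hw3]; norm_num
    have h := main1 3 h3
    rw [hsF3, show (1 / (1 / 3 : ℝ)) = 3 by norm_num] at h
    have hpos := Mfin_pos h3 (m + 1) (m + 1)
    rcases mul_self_eq_one_iff.mp h with h1 | h1
    · exact h1
    · linarith
  · have h := main2 1 one_pos
    rw [show (1 / (1:ℝ)) = 1 by norm_num] at h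
    have hpos := Mfin_pos one_pos (m + 2) (m + 1)
    rcases mul_self_eq_one_iff.mp h with h1 | h1
    · exact h1
    · linarith
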